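/- arXiv:1702.05582 — 2 statements merged into one kernel-verified Lean document; each statement's English description precedes it below -/
import Mathlib

section
/- For complex numbers α and β with Re(α) > 0 and Re(β) > 0, and for every complex number z, the two-parameter Mittag-Leffler series ∑_{n=0}^∞ z^n · (Γ(αn + β))⁻¹ is summable, where (Γ(·))⁻¹ denotes the reciprocal of the complex Gamma function. -/
open Filter Finset Topology Nat

/-- Telescoping bound for the sum of inverse squares shifted by `x > 0`. -/
lemma aux_sum_inv_sq_le (x : ℝ) (hx : 0 < x) (n : ℕ) :
    ∑ j ∈ Finset.range (n + 1), 1 / (x + j) ^ 2 ≤ 1 / x ^ 2 + (1 / x - 1 / (x + n)) := by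
  induction n with
  | zero => simp
  | succ n ih =>
      rw [Finset.sum_range_succ]
      have ha : (0:ℝ) < x + n := by positivity
      have hb : (0:ℝ) < x + (n + 1 : ℕ) := by push_cast; positivity
      have key : 1 / (x + (n + 1 : ℕ)) ^ 2 ≤ 1 / (x + n) - 1 / (x + (n + 1 : ℕ)) := by
        push_cast
        rw [div_sub_div _ _ (ne_of_gt ha) (by push_cast at hb; exact ne_of_gt hb)]
        push_cast at hb ⊢
        rw [div_le_div_iff₀ (by positivity) (by positivity)]
        ring_nf
        nlinarith [sq_nonneg (x + n)]
      push_cast at key ih ⊢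
      linarith

/-- Lower bound for the absolute value of the complex Gamma function in the right
half-plane, in terms of the real Gamma function of the real part. -/
lemma aux_abs_Gamma_lower (s : ℂ) (hs : 0 < s.re) :
    Real.Gamma s.re * Real.exp (-(s.im ^ 2 * (1 / s.re ^ 2 + 1 / s.re)) / 2)
      ≤ ‖Complex.Gamma s‖ := by
  set x := s.re with hxdef
  set y := s.im with hydef
  set C : ℝ := Real.exp (-(y ^ 2 * (1 / x ^ 2 + 1 / x)) / 2) with hC
  have h1 : Tendsto (fun n => ‖Complex.GammaSeq s n‖) atTop
      (𝓝 (‖Complex.Gamma s‖)) := by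
    exact (Complex.GammaSeq_tendsto_Gamma s).norm
  have h2 : Tendsto (fun n => C * Real.GammaSeq x n) atTop (𝓝 (C * Real.Gamma x)) :=
    (Real.GammaSeq_tendsto_Gamma x).const_mul C
  have key : ∀ᶠ n in atTop, C * Real.GammaSeq x n ≤ ‖Complex.GammaSeq s n‖ := by
    filter_upwards [eventually_ge_atTop 1] with n hn
    have hn0 : (0:ℝ) < n := by exact_mod_cast hn
    -- compute the absolute value of the complex Gamma sequence
    have habs : ‖Complex.GammaSeq s n‖ =
        ((n:ℝ) ^ x * n !) / ∏ j ∈ Finset.range (n + 1), ‖s + j‖ := by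
      rw [Complex.GammaSeq, norm_div, norm_mul, norm_prod]
      congr 2
      · exact Complex.norm_cpow_eq_rpow_re_of_pos hn0 s
      · rw [Complex.norm_natCast]
    have hD2pos : (0:ℝ) < ∏ j ∈ Finset.range (n + 1), (x + j) :=
      Finset.prod_pos fun j _ => by positivity
    have hD1pos : (0:ℝ) < ∏ j ∈ Finset.range (n + 1), ‖s + j‖ :=
      Finset.prod_pos fun j _ => by
        refine norm_pos_iff.mpr fun h => ?_
        have : (s + j).re = 0 := by rw [h]; simp
        simp only [Complex.add_re, Complex.natCast_re] at this
        have : (0:ℝ) ≤ (j:ℝ) := Nat.cast_nonneg j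
        nlinarith [hs]
    -- pointwise bound on each factor
    have hfac : ∀ j ∈ Finset.range (n + 1),
        ‖s + j‖ ≤ (x + j) * Real.exp (y ^ 2 / (x + j) ^ 2 / 2) := by
      intro j _
      have hxj : (0:ℝ) < x + j := by positivity
      have hsq : ‖s + j‖ ^ 2 ≤ ((x + j) * Real.exp (y ^ 2 / (x + j) ^ 2 / 2)) ^ 2 := by
        rw [Complex.sq_norm, Complex.normSq_apply]
        have hre : (s + (j:ℂ)).re = x + j := by simp [hxdef]
        have him : (s + (j:ℂ)).im = y := by simp [hydef]
        rw [hre, him, mul_pow]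
        have hexp2 : Real.exp (y ^ 2 / (x + j) ^ 2 / 2) ^ 2 = Real.exp (y ^ 2 / (x + j) ^ 2) := by
          rw [sq, ← Real.exp_add]
          congr 1
          ring
        rw [hexp2]
        have hle : 1 + y ^ 2 / (x + j) ^ 2 ≤ Real.exp (y ^ 2 / (x + j) ^ 2) := by
          have := Real.add_one_le_exp (y ^ 2 / (x + j) ^ 2)
          linarith
        have h2 : (x + j) ^ 2 * (1 + y ^ 2 / (x + j) ^ 2) = (x + j) ^ 2 + y ^ 2 := by
          field_simp
        nlinarith [sq_nonneg (x + j), mul_le_mul_of_nonneg_left hle (sq_nonneg (x + j))]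
      have hb : (0:ℝ) ≤ (x + j) * Real.exp (y ^ 2 / (x + j) ^ 2 / 2) := by positivity
      nlinarith [norm_nonneg (s + j), hsq, hb]
    -- product bound
    have hprod : ∏ j ∈ Finset.range (n + 1), ‖s + j‖
        ≤ (∏ j ∈ Finset.range (n + 1), (x + j)) *
          Real.exp (∑ j ∈ Finset.range (n + 1), y ^ 2 / (x + j) ^ 2 / 2) := by
      calc ∏ j ∈ Finset.range (n + 1), ‖s + j‖
          ≤ ∏ j ∈ Finset.range (n + 1), ((x + j) * Real.exp (y ^ 2 / (x + j) ^ 2 / 2)) :=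
            Finset.prod_le_prod (fun j _ => norm_nonneg _) hfac
        _ = (∏ j ∈ Finset.range (n + 1), (x + j)) *
              ∏ j ∈ Finset.range (n + 1), Real.exp (y ^ 2 / (x + j) ^ 2 / 2) :=
            Finset.prod_mul_distrib
        _ = _ := by rw [Real.exp_sum]
    -- sum bound
    have hsum : ∑ j ∈ Finset.range (n + 1), y ^ 2 / (x + j) ^ 2 / 2
        ≤ y ^ 2 * (1 / x ^ 2 + 1 / x) / 2 := by
      have : ∑ j ∈ Finset.range (n + 1), y ^ 2 / (x + j) ^ 2 / 2
          = y ^ 2 / 2 * ∑ j ∈ Finset.range (n + 1), 1 / (x + j) ^ 2 := by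
        rw [Finset.mul_sum]; exact Finset.sum_congr rfl fun j _ => by ring
      rw [this]
      have hxn : (0:ℝ) < x + n := by positivity
      have h := aux_sum_inv_sq_le x hs n
      have h1xn : 0 ≤ 1 / (x + n) := by positivity
      have hy2 : (0:ℝ) ≤ y ^ 2 / 2 := by positivity
      have hS : ∑ j ∈ Finset.range (n + 1), 1 / (x + j) ^ 2 ≤ 1 / x ^ 2 + 1 / x := by linarith
      calc y ^ 2 / 2 * ∑ j ∈ Finset.range (n + 1), 1 / (x + j) ^ 2
          ≤ y ^ 2 / 2 * (1 / x ^ 2 + 1 / x) := mul_le_mul_of_nonneg_left hS hy2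
        _ = y ^ 2 * (1 / x ^ 2 + 1 / x) / 2 := by ring
    -- conclude
    have hDle : ∏ j ∈ Finset.range (n + 1), ‖s + j‖
        ≤ (∏ j ∈ Finset.range (n + 1), (x + j)) *
          Real.exp (y ^ 2 * (1 / x ^ 2 + 1 / x) / 2) :=
      hprod.trans (by
        have := Real.exp_le_exp.mpr hsum
        exact mul_le_mul_of_nonneg_left this hD2pos.le)
    have hGSx : Real.GammaSeq x n =
        ((n:ℝ) ^ x * n !) / ∏ j ∈ Finset.range (n + 1), (x + j) := rfl
    rw [habs, hGSx]
    have hNnonneg : (0:ℝ) ≤ (n:ℝ) ^ x * n ! := by positivity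
    rw [hC, mul_div_assoc', div_le_div_iff₀ hD2pos hD1pos]
    have hCeq : Real.exp (-(y ^ 2 * (1 / x ^ 2 + 1 / x)) / 2) *
        Real.exp (y ^ 2 * (1 / x ^ 2 + 1 / x) / 2) = 1 := by
      rw [← Real.exp_add, show -(y ^ 2 * (1 / x ^ 2 + 1 / x)) / 2 +
        y ^ 2 * (1 / x ^ 2 + 1 / x) / 2 = 0 by ring, Real.exp_zero]
    calc Real.exp (-(y ^ 2 * (1 / x ^ 2 + 1 / x)) / 2) * ((n:ℝ) ^ x * n !) *
          ∏ j ∈ Finset.range (n + 1), ‖s + j‖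
        ≤ Real.exp (-(y ^ 2 * (1 / x ^ 2 + 1 / x)) / 2) * ((n:ℝ) ^ x * n !) *
          ((∏ j ∈ Finset.range (n + 1), (x + j)) *
            Real.exp (y ^ 2 * (1 / x ^ 2 + 1 / x) / 2)) := by
          refine mul_le_mul_of_nonneg_left hDle ?_
          positivity
      _ = ((n:ℝ) ^ x * n !) * (∏ j ∈ Finset.range (n + 1), (x + j)) *
            (Real.exp (-(y ^ 2 * (1 / x ^ 2 + 1 / x)) / 2) *
              Real.exp (y ^ 2 * (1 / x ^ 2 + 1 / x) / 2)) := by ring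
      _ = ((n:ℝ) ^ x * n !) * ∏ j ∈ Finset.range (n + 1), (x + j) := by
          rw [hCeq, mul_one]
  exact mul_comm C (Real.Gamma x) ▸ le_of_tendsto_of_tendsto h2 h1 key

set_option maxHeartbeats 1000000 in
/-- For complex α, β with Re(α) > 0, Re(β) > 0, and every complex z,
the two-parameter Mittag-Leffler series ∑_{n=0}^∞ z^n · (Γ(αn + β))⁻¹ is summable. -/
theorem mittagLeffler_two_param_summable (α β : ℂ) (hα : 0 < α.re) (hβ : 0 < β.re) (z : ℂ) :
    Summable (fun n : ℕ => z ^ n * (Complex.Gamma (α * n + β))⁻¹) := by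
  set a : ℝ := α.re with ha_def
  set b : ℝ := β.re with hb_def
  set K : ℝ := (|α.im| + |β.im|) ^ 2 / a with hK
  set r : ℝ := ‖z‖ with hr
  have hr0 : 0 ≤ r := norm_nonneg z
  set P : ℝ := 2 * (r + 1) * Real.exp K with hPdef
  have hP0 : 0 < P := by positivity
  set t : ℝ := P ^ (2 / a) with htdef
  have ht0 : 0 < t := Real.rpow_pos_of_pos hP0 _
  have hP1 : 1 < P := by
    have h1 : (1:ℝ) ≤ Real.exp K := Real.one_le_exp (by positivity)
    nlinarith
  have ht1 : 1 ≤ t := Real.one_le_rpow hP1.le (by positivity)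
  -- a uniform bound for `t ^ m / m !`
  obtain ⟨B, hBmem⟩ := ((Real.summable_pow_div_factorial t).tendsto_atTop_zero).bddAbove_range
  have hB : ∀ m : ℕ, t ^ m / m ! ≤ B := fun m => hBmem (Set.mem_range_self m)
  have hB1 : (1:ℝ) ≤ B := by simpa using hB 0
  have hB0 : (0:ℝ) < B := lt_of_lt_of_le one_pos hB1
  -- eventual norm bound
  have hev : ∀ᶠ n : ℕ in atTop, ‖z ^ n * (Complex.Gamma (α * n + β))⁻¹‖ ≤ B * (1 / 2) ^ n := by
    have htend : Tendsto (fun n : ℕ => a * (n : ℝ)) atTop atTop :=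
      Tendsto.const_mul_atTop hα tendsto_natCast_atTop_atTop
    filter_upwards [eventually_ge_atTop 1, htend.eventually_ge_atTop 4] with n hn1 h4
    have hn1' : (1:ℝ) ≤ (n:ℝ) := by exact_mod_cast hn1
    set s : ℂ := α * n + β with hs_def
    have hre : s.re = a * n + b := by
      simp [hs_def, Complex.add_re, Complex.mul_re, ha_def, hb_def]
    have him : s.im = α.im * n + β.im := by
      simp [hs_def, Complex.add_im, Complex.mul_im]
    have hres : 0 < s.re := by rw [hre]; nlinarith
    have hx1 : 1 ≤ s.re := by rw [hre]; nlinarith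
    -- the exponent bound: C_n ≤ K * n
    have hCK : s.im ^ 2 * (1 / s.re ^ 2 + 1 / s.re) / 2 ≤ K * n := by
      have him2 : s.im ^ 2 ≤ ((|α.im| + |β.im|) * n) ^ 2 := by
        have h1 : |s.im| ≤ (|α.im| + |β.im|) * n := by
          rw [him]
          calc |α.im * n + β.im| ≤ |α.im * n| + |β.im| := abs_add_le _ _
            _ = |α.im| * n + |β.im| := by rw [abs_mul, Nat.abs_cast]
            _ ≤ (|α.im| + |β.im|) * n := by nlinarith [abs_nonneg β.im]
        calc s.im ^ 2 = |s.im| ^ 2 := (sq_abs _).symm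
          _ ≤ ((|α.im| + |β.im|) * n) ^ 2 := by
              have h0 : 0 ≤ |s.im| := abs_nonneg _
              nlinarith
      have hfr : 1 / s.re ^ 2 + 1 / s.re ≤ 2 / (a * n) := by
        have h1 : 1 / s.re ^ 2 ≤ 1 / s.re := by
          rw [div_le_div_iff₀ (by positivity) hres]
          nlinarith
        have h2 : 1 / s.re ≤ 1 / (a * n) := by
          apply one_div_le_one_div_of_le (by nlinarith)
          rw [hre]; nlinarith
        calc 1 / s.re ^ 2 + 1 / s.re ≤ 2 * (1 / s.re) := by linarith
          _ ≤ 2 * (1 / (a * n)) := by linarith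
          _ = 2 / (a * n) := by ring
      have hprod_le : s.im ^ 2 * (1 / s.re ^ 2 + 1 / s.re)
          ≤ ((|α.im| + |β.im|) * n) ^ 2 * (2 / (a * n)) := by
        have h1 : 0 ≤ s.im ^ 2 := sq_nonneg _
        have h2 : 0 ≤ 1 / s.re ^ 2 + 1 / s.re := by positivity
        have h3 : 0 ≤ ((|α.im| + |β.im|) * n) ^ 2 := sq_nonneg _
        exact mul_le_mul him2 hfr h2 h3
      have heq : ((|α.im| + |β.im|) * n) ^ 2 * (2 / (a * n)) = 2 * (K * n) := by
        rw [hK]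
        have hn0 : (n:ℝ) ≠ 0 := by positivity
        field_simp
      linarith [hprod_le.trans_eq heq]
    -- factorial lower bound for Gamma
    set m : ℕ := ⌈a * n / 2⌉₊ with hm_def
    have hm_le : (m:ℝ) ≤ a * n / 2 + 1 := (Nat.ceil_lt_add_one (by positivity)).le
    have hm_ge : a * n / 2 ≤ (m:ℝ) := Nat.le_ceil _
    have hm1 : 1 ≤ m := by
      have : (0:ℝ) < a * n / 2 := by nlinarith
      exact Nat.one_le_iff_ne_zero.mpr (by positivity)
    have hm1' : (1:ℝ) ≤ (m:ℝ) := by exact_mod_cast hm1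
    have hmx : (m:ℝ) + 1 ≤ s.re := by rw [hre]; nlinarith
    have hfact_le : (m ! : ℝ) ≤ Real.Gamma s.re := by
      have h1 : Real.Gamma ((m:ℝ) + 1) = m ! := Real.Gamma_nat_eq_factorial m
      rw [← h1]
      refine Real.Gamma_strictMonoOn_Ici.monotoneOn ?_ ?_ hmx
      · simp only [Set.mem_Ici]; linarith
      · simp only [Set.mem_Ici]; linarith
    -- P ^ n / B ≤ m !
    have hPn_le : P ^ n / B ≤ (m ! : ℝ) := by
      have h1 : t ^ m ≤ B * m ! := by
        have := hB m
        have hfpos : (0:ℝ) < m ! := by positivity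
        rw [div_le_iff₀ hfpos] at this
        linarith
      have h2 : P ^ n ≤ t ^ m := by
        have e1 : (P:ℝ) ^ n = P ^ ((n:ℝ)) := (Real.rpow_natCast P n).symm
        have e2 : (t:ℝ) ^ m = t ^ ((m:ℝ)) := by
          rw [htdef, ← Real.rpow_natCast (P ^ (2/a)) m]
        rw [e1, e2, htdef, ← Real.rpow_mul hP0.le]
        apply Real.rpow_le_rpow_of_exponent_le hP1.le
        rw [div_mul_eq_mul_div, le_div_iff₀ hα]
        nlinarith
      rw [div_le_iff₀ hB0]
      calc P ^ n ≤ t ^ m := h2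
        _ ≤ B * m ! := h1
        _ = (m ! : ℝ) * B := by ring
    -- lower bound on |Γ(s)|
    have hGamma_lb : P ^ n / B * (Real.exp K ^ n)⁻¹ ≤ ‖Complex.Gamma s‖ := by
      have h1 := aux_abs_Gamma_lower s hres
      have h2 : (Real.exp K ^ n)⁻¹ ≤ Real.exp (-(s.im ^ 2 * (1 / s.re ^ 2 + 1 / s.re)) / 2) := by
        rw [← Real.exp_nat_mul, ← Real.exp_neg, Real.exp_le_exp]
        have : -(s.im ^ 2 * (1 / s.re ^ 2 + 1 / s.re)) / 2
            = -(s.im ^ 2 * (1 / s.re ^ 2 + 1 / s.re) / 2) := by ring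
        rw [this]
        have : (n:ℝ) * K = K * n := by ring
        rw [this]
        linarith
      have h3 : P ^ n / B ≤ Real.Gamma s.re := hPn_le.trans hfact_le
      calc P ^ n / B * (Real.exp K ^ n)⁻¹
          ≤ Real.Gamma s.re * Real.exp (-(s.im ^ 2 * (1 / s.re ^ 2 + 1 / s.re)) / 2) := by
            apply mul_le_mul h3 h2 (by positivity)
            exact (Real.Gamma_pos_of_pos hres).le
        _ ≤ ‖Complex.Gamma s‖ := h1
    have hG0 : 0 < ‖Complex.Gamma s‖ :=
      lt_of_lt_of_le (by positivity) hGamma_lb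
    -- final computation
    have hnorm : ‖z ^ n * (Complex.Gamma s)⁻¹‖ = r ^ n / ‖Complex.Gamma s‖ := by
      rw [norm_mul, norm_pow, norm_inv, div_eq_mul_inv,
        hr]
    calc ‖z ^ n * (Complex.Gamma s)⁻¹‖
        = r ^ n / ‖Complex.Gamma s‖ := hnorm
      _ ≤ r ^ n / (P ^ n / B * (Real.exp K ^ n)⁻¹) := by
          gcongr
      _ = B * ((r * Real.exp K / P) ^ n) := by
          rw [div_pow, mul_pow]
          have h1 : (0:ℝ) < Real.exp K ^ n := by positivity
          have h2 : (0:ℝ) < P ^ n := by positivity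
          field_simp
          ring
      _ ≤ B * ((1 / 2) ^ n) := by
          apply mul_le_mul_of_nonneg_left _ hB0.le
          apply pow_le_pow_left₀ (by positivity)
          rw [hPdef, div_le_div_iff₀ (by positivity) (by norm_num)]
          nlinarith [Real.exp_pos K]
  refine Summable.of_norm_bounded_eventually (g := fun n : ℕ => B * (1 / 2) ^ n)
    (summable_geometric_two.mul_left B) ?_
  rwa [Nat.cofinite_eq_atTop]
end

section
/- For every real number α with 0 < α ≤ 1 and every real number x, the Mittag-Leffler function value is strictly positive: E_α(x) > 0. -/
/-- The Mittag-Leffler function E_α(x) = ∑_{k=0}^∞ x^k / Γ(αk + 1). -/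
noncomputable def mittagLeffler (α x : ℝ) : ℝ :=
  ∑' k : ℕ, x ^ k / Real.Gamma (α * k + 1)

namespace MLaux

open MeasureTheory Set
open scoped Nat

/-- Summability of the majorant series, for `R ≥ 1`. -/
lemma summable_aux {α : ℝ} (hα : 0 < α) {R : ℝ} (hR : 1 ≤ R) :
    Summable (fun k : ℕ => R ^ k / Real.Gamma (α * k + 1)) := by
  have hR0 : 0 < R := lt_of_lt_of_le one_pos hR
  obtain ⟨m₀, hm₀⟩ := exists_nat_ge ((2 * R) ^ (1 / α))
  set m : ℕ := m₀ + 1 with hm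
  set b : ℝ := (m : ℝ) + 1 with hb
  have hm1 : (1:ℝ) ≤ (m:ℝ) := by exact_mod_cast (by omega : 1 ≤ m)
  have hb2 : (2:ℝ) ≤ b := by rw [hb]; linarith
  have hb1 : (1:ℝ) < b := by linarith
  have hb0 : (0:ℝ) < b := by linarith
  have hbα : 2 * R ≤ b ^ α := by
    have h1 : (2 * R) ^ (1 / α) ≤ b := by
      have hmm : ((m₀:ℝ)) ≤ (m:ℝ) := by exact_mod_cast Nat.le_succ m₀
      rw [hb]; linarith
    have h2 : ((2 * R) ^ (1 / α)) ^ α ≤ b ^ α :=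
      Real.rpow_le_rpow (Real.rpow_nonneg (by linarith) _) h1 hα.le
    rwa [← Real.rpow_mul (by linarith), one_div_mul_cancel hα.ne', Real.rpow_one] at h2
  obtain ⟨k₀, hk₀⟩ := exists_nat_ge (((m:ℝ) + 2) / α)
  have hk₀' : (m:ℝ) + 2 ≤ α * k₀ := by
    rw [div_le_iff₀ hα] at hk₀; linarith
  set C : ℝ := b ^ ((m:ℝ) + 2) with hC
  have hCpos : 0 < C := Real.rpow_pos_of_pos hb0 _
  have key : ∀ k : ℕ, k₀ ≤ k → R ^ k / Real.Gamma (α * k + 1) ≤ C * (1/2) ^ k := by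
    intro k hk
    have hkk : (k₀:ℝ) ≤ (k:ℝ) := by exact_mod_cast hk
    have hak : (m:ℝ) + 2 ≤ α * k := le_trans hk₀' (by nlinarith)
    set n : ℕ := ⌊α * (k:ℝ)⌋₊ with hn
    have hak0 : (0:ℝ) ≤ α * (k:ℝ) := by positivity
    have hnle : (n:ℝ) ≤ α * k := Nat.floor_le hak0
    have hlt : α * (k:ℝ) < n + 1 := Nat.lt_floor_add_one _
    have hmcast : ((m:ℕ):ℝ) = (m₀:ℝ) + 1 := by rw [hm]; push_cast; ring
    have hmn : m + 2 ≤ n := Nat.le_floor (by push_cast; linarith [hmcast])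
    -- Gamma lower bound via factorial
    have hg1 : Real.Gamma ((n:ℝ) + 1) ≤ Real.Gamma (α * k + 1) := by
      have h2n : (2:ℝ) ≤ (n:ℝ) + 1 := by
        have : (1:ℝ) ≤ (n:ℝ) := by exact_mod_cast (by omega : 1 ≤ n)
        linarith
      exact Real.Gamma_strictMonoOn_Ici.monotoneOn (Set.mem_Ici.mpr h2n)
        (Set.mem_Ici.mpr (by linarith)) (by linarith)
    have hfact : Real.Gamma ((n:ℝ) + 1) = (n)! := by
      exact_mod_cast Real.Gamma_nat_eq_factorial n
    have hfac2 : (m+1)! * (m + 2) ^ (n - (m+1)) ≤ n ! := by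
      have h := Nat.factorial_mul_pow_le_factorial (m := m+1) (n := n - (m+1))
      rwa [Nat.add_sub_cancel' (by omega : m + 1 ≤ n)] at h
    have hfac3 : ((m + 2:ℕ) : ℝ) ^ (n - (m+1)) ≤ (n ! : ℝ) := by
      have h1 : (m + 2:ℕ) ^ (n - (m+1)) ≤ n ! :=
        le_trans (Nat.le_mul_of_pos_left _ (Nat.factorial_pos _)) hfac2
      exact_mod_cast h1
    have hbn : b ^ (α * k - ((m:ℝ) + 2)) ≤ (n ! : ℝ) := by
      have h1 : b ^ (α * k - ((m:ℝ) + 2)) ≤ b ^ (((n - (m+1) : ℕ)) : ℝ) := by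
        rw [Nat.cast_sub (by omega : m + 1 ≤ n)]
        refine (Real.rpow_le_rpow_left_iff hb1).mpr ?_
        push_cast; linarith
      refine h1.trans ?_
      rw [Real.rpow_natCast]
      refine le_trans ?_ hfac3
      refine pow_le_pow_left₀ hb0.le ?_ _
      push_cast [hb]; linarith
    have hQpos : (0:ℝ) < b ^ (α * k - ((m:ℝ) + 2)) := Real.rpow_pos_of_pos hb0 _
    have hGamma_ge : b ^ (α * k - ((m:ℝ) + 2)) ≤ Real.Gamma (α * k + 1) := by
      calc b ^ (α * k - ((m:ℝ) + 2)) ≤ (n ! : ℝ) := hbn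
        _ = Real.Gamma ((n:ℝ) + 1) := hfact.symm
        _ ≤ _ := hg1
    have step1 : R ^ k / Real.Gamma (α * k + 1) ≤ R ^ k / b ^ (α * k - ((m:ℝ) + 2)) :=
      div_le_div_of_nonneg_left (pow_nonneg hR0.le _) hQpos hGamma_ge
    have hsplit : b ^ (α * k - ((m:ℝ) + 2)) = b ^ (α * (k:ℝ)) / C := by
      rw [hC, Real.rpow_sub hb0]
    have hpow : (2 * R) ^ k ≤ b ^ (α * (k:ℝ)) := by
      rw [Real.rpow_mul hb0.le, Real.rpow_natCast]
      exact pow_le_pow_left₀ (by positivity) hbα k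
    have step2 : R ^ k / b ^ (α * k - ((m:ℝ) + 2)) ≤ C * (1/2) ^ k := by
      rw [hsplit, div_div_eq_mul_div, mul_comm, mul_div_assoc]
      refine mul_le_mul_of_nonneg_left ?_ hCpos.le
      rw [div_le_iff₀ (Real.rpow_pos_of_pos hb0 _)]
      calc R ^ k = (1/2)^k * (2*R)^k := by
            rw [← mul_pow]; ring_nf
        _ ≤ (1/2)^k * b ^ (α * (k:ℝ)) := by
            refine mul_le_mul_of_nonneg_left hpow (by positivity)
    exact step1.trans step2
  rw [← summable_nat_add_iff k₀]
  have hgeom : Summable (fun k : ℕ => C * (1/2 : ℝ) ^ (k + k₀)) := by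
    exact ((summable_nat_add_iff (f := fun k : ℕ => C * (1/2:ℝ) ^ k) k₀).mpr
      ((summable_geometric_of_lt_one (by norm_num) (by norm_num)).mul_left C))
  refine Summable.of_nonneg_of_le (fun k => ?_) (fun k => key (k + k₀) (Nat.le_add_left _ _)) hgeom
  exact div_nonneg (pow_nonneg hR0.le _) (Real.Gamma_pos_of_pos (by positivity)).le

/-- Summability of the Mittag-Leffler series for any real `x`. -/
lemma summable_ml {α : ℝ} (hα : 0 < α) (x : ℝ) :
    Summable (fun k : ℕ => x ^ k / Real.Gamma (α * k + 1)) := by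
  refine Summable.of_norm ?_
  have h := summable_aux hα (le_max_right |x| 1)
  refine Summable.of_nonneg_of_le (fun k => norm_nonneg _) (fun k => ?_) h
  have hG : 0 < Real.Gamma (α * k + 1) := Real.Gamma_pos_of_pos (by positivity)
  rw [Real.norm_eq_abs, abs_div, abs_pow, abs_of_pos hG]
  gcongr
  exact le_max_left _ _

lemma ml_continuous {α : ℝ} (hα : 0 < α) : Continuous (mittagLeffler α) := by
  rw [continuous_iff_continuousAt]
  intro x
  set T : ℝ := |x| + 1 with hT
  have hT1 : (1:ℝ) ≤ T := by rw [hT]; linarith [abs_nonneg x]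
  have hc : ContinuousOn (fun y => ∑' k : ℕ, y ^ k / Real.Gamma (α * k + 1))
      (Set.Icc (-T) T) := by
    refine continuousOn_tsum (fun k => (Continuous.continuousOn (by continuity)))
      (summable_aux hα hT1) (fun k y hy => ?_)
    have hG : 0 < Real.Gamma (α * k + 1) := Real.Gamma_pos_of_pos (by positivity)
    rw [Real.norm_eq_abs, abs_div, abs_pow, abs_of_pos hG]
    gcongr
    exact abs_le.mpr ⟨hy.1, hy.2⟩
  have hmem : Set.Icc (-T) T ∈ nhds x :=
    Icc_mem_nhds (by linarith [neg_abs_le x]) (by linarith [le_abs_self x])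
  exact hc.continuousAt hmem

lemma ml_zero (α : ℝ) : mittagLeffler α 0 = 1 := by
  rw [mittagLeffler]
  rw [tsum_eq_single 0 (fun k hk => by simp [zero_pow hk])]
  simp [Real.Gamma_one]

/-- The real Beta integral. -/
lemma beta_rpow {a b t : ℝ} (ha : 0 < a) (hb : 0 < b) (ht : 0 < t) :
    ∫ s in Ioc (0:ℝ) t, (t - s) ^ (a - 1) * s ^ (b - 1)
      = Real.Gamma a * Real.Gamma b / Real.Gamma (a + b) * t ^ (a + b - 1) := by
  have hsc := Complex.betaIntegral_scaled (b:ℂ) (a:ℂ) ht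
  have hcongr : ∀ x ∈ Set.uIcc (0:ℝ) t,
      (x:ℂ) ^ ((b:ℂ) - 1) * ((t:ℂ) - x) ^ ((a:ℂ) - 1)
        = (((t - x) ^ (a - 1) * x ^ (b - 1) : ℝ) : ℂ) := by
    intro x hx
    rw [Set.uIcc_of_le ht.le] at hx
    have h1 : (((t - x) ^ (a-1) : ℝ) : ℂ) = ((t:ℂ) - x) ^ ((a:ℂ) - 1) := by
      rw [Complex.ofReal_cpow (by linarith [hx.2])]
      push_cast; ring_nf
    have h2 : ((x ^ (b-1) : ℝ) : ℂ) = (x:ℂ) ^ ((b:ℂ) - 1) := by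
      rw [Complex.ofReal_cpow hx.1]
      push_cast; ring_nf
    rw [Complex.ofReal_mul, h1, h2]; ring
  have hL : (∫ x in (0:ℝ)..t, (x:ℂ) ^ ((b:ℂ)-1) * ((t:ℂ) - x) ^ ((a:ℂ)-1))
      = ((∫ s in (0:ℝ)..t, (t - s) ^ (a-1) * s ^ (b-1) : ℝ) : ℂ) := by
    rw [intervalIntegral.integral_congr hcongr]
    exact intervalIntegral.integral_ofReal
  have hβ : Complex.betaIntegral (b:ℂ) (a:ℂ)
      = ((Real.Gamma a * Real.Gamma b / Real.Gamma (a+b) : ℝ) : ℂ) := by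
    have h := Complex.Gamma_mul_Gamma_eq_betaIntegral (s := (b:ℂ)) (t := (a:ℂ))
      (by simpa using hb) (by simpa using ha)
    have hre : (0:ℝ) < Complex.re ((b:ℂ) + (a:ℂ)) := by simpa using (by linarith : (0:ℝ) < b + a)
    have hne : Complex.Gamma ((b:ℂ) + (a:ℂ)) ≠ 0 := Complex.Gamma_ne_zero_of_re_pos hre
    have hβ' : Complex.betaIntegral (b:ℂ) (a:ℂ)
        = Complex.Gamma (b:ℂ) * Complex.Gamma (a:ℂ) / Complex.Gamma ((b:ℂ)+(a:ℂ)) := by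
      rw [eq_div_iff hne, mul_comm]
      exact h.symm
    rw [hβ', show (b:ℂ)+(a:ℂ) = ((a+b : ℝ):ℂ) by push_cast; ring,
       Complex.Gamma_ofReal, Complex.Gamma_ofReal, Complex.Gamma_ofReal]
    push_cast
    ring
  have hT : ((t:ℂ)) ^ ((b:ℂ) + (a:ℂ) - 1) = ((t ^ (a+b-1) : ℝ) : ℂ) := by
    rw [Complex.ofReal_cpow ht.le]
    congr 1
    push_cast; ring
  have hI : (∫ s in (0:ℝ)..t, (t - s) ^ (a-1) * s ^ (b-1))
      = t ^ (a+b-1) * (Real.Gamma a * Real.Gamma b / Real.Gamma (a+b)) := by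
    have hc : ((∫ s in (0:ℝ)..t, (t - s) ^ (a-1) * s ^ (b-1) : ℝ) : ℂ)
        = ((t ^ (a+b-1) * (Real.Gamma a * Real.Gamma b / Real.Gamma (a+b)) : ℝ) : ℂ) := by
      rw [← hL, hsc, hβ, hT]
      push_cast; ring
    exact_mod_cast hc
  rw [← intervalIntegral.integral_of_le ht.le, hI]
  ring

/-- `u` is the Mittag-Leffler function along `t ↦ -λ tᵅ`. -/
noncomputable def u (α lam : ℝ) (t : ℝ) : ℝ := mittagLeffler α (-(lam * t ^ α))

lemma contOn_rpow_const {c : ℝ} (hc : 0 ≤ c) :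
    ContinuousOn (fun s : ℝ => s ^ c) (Ici (0:ℝ)) := by
  intro x _
  exact (Real.continuousAt_rpow_const x c (Or.inr hc)).continuousWithinAt

lemma u_series {α lam : ℝ} {t : ℝ} (ht : 0 ≤ t) :
    u α lam t = ∑' k : ℕ, ((-lam) ^ k * t ^ (α * k) / Real.Gamma (α * k + 1)) := by
  rw [u, mittagLeffler]
  refine tsum_congr (fun k => ?_)
  congr 1
  rw [show -(lam * t ^ α) = (-lam) * t ^ α by ring, mul_pow]
  congr 1
  rw [← Real.rpow_natCast (t ^ α) k, ← Real.rpow_mul ht]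

lemma u_contOn {α lam : ℝ} (hα : 0 < α) : ContinuousOn (u α lam) (Ici (0:ℝ)) := by
  have h1 : ContinuousOn (fun t : ℝ => -(lam * t ^ α)) (Ici 0) :=
    (continuousOn_const.mul (contOn_rpow_const hα.le)).neg
  exact (ml_continuous hα).comp_continuousOn h1

lemma u_zero {α lam : ℝ} (hα : 0 < α) : u α lam 0 = 1 := by
  rw [u, Real.zero_rpow hα.ne', mul_zero, neg_zero, ml_zero]

lemma integrable_kernel_mul {α t : ℝ} (hα0 : 0 < α) (ht : 0 < t) {g : ℝ → ℝ}
    (hg : ContinuousOn g (Icc 0 t)) :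
    IntegrableOn (fun s => (t - s) ^ (α - 1) * g s) (Ioc 0 t) := by
  have hker : IntegrableOn (fun s : ℝ => (t - s) ^ (α - 1)) (Ioc 0 t) := by
    have h1 : IntervalIntegrable (fun x : ℝ => x ^ (α - 1)) volume 0 t :=
      intervalIntegral.intervalIntegrable_rpow' (by linarith)
    have h2 := h1.comp_sub_left t
    simp only [sub_zero, sub_self] at h2
    rw [intervalIntegrable_iff, Set.uIoc_comm, Set.uIoc_of_le ht.le] at h2
    exact h2
  obtain ⟨C, hC⟩ := (isCompact_Icc : IsCompact (Icc (0:ℝ) t)).exists_bound_of_continuousOn hg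
  have hmeas : AEStronglyMeasurable g (volume.restrict (Ioc 0 t)) := by
    have h := hg.aestronglyMeasurable (μ := volume) measurableSet_Icc
    exact h.mono_measure (Measure.restrict_mono Ioc_subset_Icc_self le_rfl)
  have hbd : ∀ᵐ x ∂(volume.restrict (Ioc 0 t)), ‖g x‖ ≤ C :=
    (ae_restrict_iff' measurableSet_Ioc).mpr
      (Filter.Eventually.of_forall fun x hx => hC x (Ioc_subset_Icc_self hx))
  have h := MeasureTheory.Integrable.mul_bdd (g := g) (c := C) hker hmeas hbd
  exact h

/-- The Volterra integral equation for `u`. -/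
lemma IE {α lam : ℝ} (hα0 : 0 < α) (hl : 0 < lam) {t : ℝ} (ht : 0 < t) :
    u α lam t
      = 1 - (lam / Real.Gamma α) * ∫ s in Ioc (0:ℝ) t, (t - s) ^ (α - 1) * u α lam s := by
  have hΓα : 0 < Real.Gamma α := Real.Gamma_pos_of_pos hα0
  have hGpos : ∀ k : ℕ, 0 < Real.Gamma (α * k + 1) :=
    fun k => Real.Gamma_pos_of_pos (by positivity)
  set F : ℕ → ℝ → ℝ :=
    fun k s => (t - s) ^ (α - 1) * ((-lam) ^ k * s ^ (α * k) / Real.Gamma (α * k + 1)) with hF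
  have htα : 0 < t ^ α := Real.rpow_pos_of_pos ht α
  set R : ℝ := lam * t ^ α with hR
  have hRpos : 0 < R := by positivity
  set R' : ℝ := max R 1 with hR'
  have hR'1 : 1 ≤ R' := le_max_right _ _
  have hRR' : R ≤ R' := le_max_left _ _
  -- pointwise identity on Ioc
  have hpt : ∀ s ∈ Ioc (0:ℝ) t, (t - s) ^ (α - 1) * u α lam s = ∑' k, F k s := by
    intro s hs
    rw [u_series hs.1.le, ← tsum_mul_left]
  -- each F k integrable
  have hFint : ∀ k : ℕ, IntegrableOn (F k) (Ioc 0 t) := by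
    intro k
    refine integrable_kernel_mul hα0 ht ?_
    have hcont : ContinuousOn (fun s : ℝ => s ^ (α * (k:ℝ))) (Icc 0 t) :=
      (contOn_rpow_const (by positivity)).mono (fun x hx => hx.1)
    exact (continuousOn_const.mul hcont).div_const _
  -- generic integral evaluation
  have hgen : ∀ c : ℝ, ∀ k : ℕ,
      (∫ s in Ioc (0:ℝ) t, (t - s) ^ (α - 1) * (c ^ k * s ^ (α * (k:ℝ)) / Real.Gamma (α * k + 1)))
        = Real.Gamma α * (c ^ k * t ^ (α * ((k:ℝ) + 1)) / Real.Gamma (α * ((k:ℝ) + 1) + 1)) := by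
    intro c k
    have hb : (0:ℝ) < α * (k:ℝ) + 1 := by positivity
    have h := beta_rpow (a := α) (b := α * (k:ℝ) + 1) hα0 hb ht
    rw [add_sub_cancel_right] at h
    rw [show α + (α * (k:ℝ) + 1) = α * ((k:ℝ) + 1) + 1 by ring] at h
    rw [show α * ((k:ℝ) + 1) + 1 - 1 = α * ((k:ℝ) + 1) by ring] at h
    have hpull : ∀ s : ℝ, (t - s) ^ (α - 1) * (c ^ k * s ^ (α * (k:ℝ)) / Real.Gamma (α * k + 1))
        = (c ^ k / Real.Gamma (α * k + 1)) * ((t - s) ^ (α - 1) * s ^ (α * (k:ℝ))) := by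
      intro s; ring
    simp_rw [hpull]
    rw [MeasureTheory.integral_const_mul, h]
    have h1 : Real.Gamma (α * ((k:ℝ) + 1) + 1) ≠ 0 := by
      have := hGpos (k + 1); push_cast at this; exact this.ne'
    field_simp
  have hval : ∀ k : ℕ, (∫ s in Ioc (0:ℝ) t, F k s)
      = Real.Gamma α * ((-lam) ^ k * t ^ (α * ((k:ℝ) + 1)) / Real.Gamma (α * ((k:ℝ) + 1) + 1)) :=
    fun k => hgen (-lam) k
  -- norm integrals
  have hnorm : ∀ k : ℕ, (∫ s in Ioc (0:ℝ) t, ‖F k s‖)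
      = Real.Gamma α * (lam ^ k * t ^ (α * ((k:ℝ) + 1)) / Real.Gamma (α * ((k:ℝ) + 1) + 1)) := by
    intro k
    have hcongr : ∀ s ∈ Ioc (0:ℝ) t, ‖F k s‖
        = (t - s) ^ (α - 1) * (lam ^ k * s ^ (α * (k:ℝ)) / Real.Gamma (α * k + 1)) := by
      intro s hs
      rw [hF]
      simp only [Real.norm_eq_abs, abs_mul, abs_div, abs_pow, abs_neg]
      rw [abs_of_nonneg (Real.rpow_nonneg (by linarith [hs.2] : (0:ℝ) ≤ t - s) _),
          abs_of_nonneg (Real.rpow_nonneg hs.1.le _),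
          abs_of_pos (hGpos k), abs_of_pos hl]
    rw [MeasureTheory.setIntegral_congr_fun measurableSet_Ioc hcongr]
    exact hgen lam k
  -- summability of the norm integrals
  have hsummand : ∀ k : ℕ,
      Real.Gamma α * (lam ^ k * t ^ (α * ((k:ℝ) + 1)) / Real.Gamma (α * ((k:ℝ) + 1) + 1))
        = Real.Gamma α * t ^ α * (R ^ k / Real.Gamma (α * ((k:ℝ) + 1) + 1)) := by
    intro k
    have ht1 : t ^ (α * ((k:ℝ) + 1)) = t ^ (α * (k:ℝ)) * t ^ α := by
      rw [← Real.rpow_add ht]; ring_nf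
    have ht2 : lam ^ k * t ^ (α * (k:ℝ)) = R ^ k := by
      rw [hR, mul_pow]
      congr 1
      rw [← Real.rpow_natCast (t ^ α) k, ← Real.rpow_mul ht.le]
    rw [ht1, show lam ^ k * (t ^ (α * (k:ℝ)) * t ^ α) = lam ^ k * t ^ (α * (k:ℝ)) * t ^ α by ring,
      ht2]
    ring
  have hshift : Summable (fun k : ℕ => R' ^ (k+1) / Real.Gamma (α * ((k:ℕ)+1:ℕ) + 1)) :=
    (summable_nat_add_iff (f := fun k : ℕ => R' ^ k / Real.Gamma (α * k + 1)) 1).mpr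
      (summable_aux hα0 hR'1)
  have hsum_norm : Summable (fun k : ℕ => ∫ s in Ioc (0:ℝ) t, ‖F k s‖) := by
    rw [funext hnorm]
    simp_rw [hsummand]
    refine Summable.mul_left _ ?_
    refine Summable.of_nonneg_of_le (fun k => by positivity) (fun k => ?_) hshift
    have hGk : 0 < Real.Gamma (α * ((k:ℝ) + 1) + 1) := by
      have := hGpos (k + 1); push_cast at this; exact this
    have hcast : ((((k:ℕ)+1:ℕ)):ℝ) = (k:ℝ) + 1 := by push_cast; ring
    rw [hcast]
    gcongr
    calc R ^ k ≤ R' ^ k := pow_le_pow_left₀ hRpos.le hRR' k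
      _ ≤ R' ^ (k+1) := pow_le_pow_right₀ (by linarith) (Nat.le_succ k)
  -- swap sum and integral
  have hswap : (∑' k, ∫ s in Ioc (0:ℝ) t, F k s)
      = ∫ s in Ioc (0:ℝ) t, (t - s) ^ (α - 1) * u α lam s := by
    rw [MeasureTheory.integral_tsum_of_summable_integral_norm hFint hsum_norm]
    exact MeasureTheory.setIntegral_congr_fun measurableSet_Ioc
      (fun s hs => (hpt s hs).symm)
  -- the series for u t and its shift
  set g : ℕ → ℝ := fun k => (-lam) ^ k * t ^ (α * (k:ℝ)) / Real.Gamma (α * k + 1) with hg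
  have hgsum : Summable g := by
    refine Summable.of_norm ?_
    refine Summable.of_nonneg_of_le (fun k => norm_nonneg _) (fun k => ?_) (summable_aux hα0 hR'1)
    rw [hg]
    simp only [Real.norm_eq_abs, abs_div, abs_mul, abs_pow, abs_neg, abs_of_pos hl,
      abs_of_pos (hGpos k), abs_of_nonneg (Real.rpow_nonneg ht.le _)]
    gcongr
    calc lam ^ k * t ^ (α * (k:ℝ)) = R ^ k := by
          rw [hR, mul_pow]
          congr 1
          rw [← Real.rpow_natCast (t ^ α) k, ← Real.rpow_mul ht.le]
      _ ≤ R' ^ k := pow_le_pow_left₀ hRpos.le hRR' k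
  have hg0 : g 0 = 1 := by
    rw [hg]
    simp [Real.rpow_zero, Real.Gamma_one]
  have hut : u α lam t = 1 + ∑' k, g (k + 1) := by
    rw [u_series ht.le,
      show (∑' k : ℕ, (-lam) ^ k * t ^ (α * (k:ℝ)) / Real.Gamma (α * k + 1)) = ∑' k, g k from rfl,
      hgsum.tsum_eq_zero_add, hg0]
  -- identify the two series
  have hfinal : (lam / Real.Gamma α) * (∑' k, ∫ s in Ioc (0:ℝ) t, F k s)
      = -∑' k, g (k + 1) := by
    rw [funext hval, ← tsum_mul_left, ← tsum_neg]
    refine tsum_congr (fun k => ?_)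
    rw [hg]
    have hcast : ((((k:ℕ)+1:ℕ)):ℝ) = (k:ℝ) + 1 := by push_cast; ring
    simp only [hcast]
    have hGk : Real.Gamma (α * ((k:ℝ) + 1) + 1) ≠ 0 := by
      have := hGpos (k + 1); push_cast at this; exact this.ne'
    have hpow : (-lam) ^ (k + 1) = -lam * (-lam) ^ k := by
      rw [pow_succ]; ring
    rw [hpow]
    field_simp
  rw [← hswap, hfinal] at *
  rw [hut]
  ring

/-- Positivity of `u` on `[0, ∞)`. -/
lemma u_pos {α lam : ℝ} (hα0 : 0 < α) (hα1 : α ≤ 1) (hl : 0 < lam) :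
    ∀ t, 0 ≤ t → 0 < u α lam t := by
  by_contra hcon
  push_neg at hcon
  obtain ⟨t₁, ht₁0, ht₁⟩ := hcon
  have hu0 : u α lam 0 = 1 := u_zero hα0
  have hucont : ContinuousOn (u α lam) (Ici 0) := u_contOn hα0
  have ht₁pos : 0 < t₁ := by
    rcases ht₁0.lt_or_eq with h | h
    · exact h
    · exfalso; rw [← h, hu0] at ht₁; linarith
  set Z : Set ℝ := {s | s ∈ Icc 0 t₁ ∧ u α lam s = 0} with hZ
  have hZsub : Z ⊆ Icc 0 t₁ := fun s hs => hs.1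
  have hconIcc : ContinuousOn (u α lam) (Icc 0 t₁) := hucont.mono (fun x hx => hx.1)
  have hZclosed : IsClosed Z := by
    have hZeq : Z = Icc 0 t₁ ∩ u α lam ⁻¹' {0} := by
      ext s; simp [hZ, Set.mem_inter_iff, Set.mem_preimage]
    rw [hZeq]
    exact hconIcc.preimage_isClosed_of_isClosed isClosed_Icc isClosed_singleton
  have hZne : Z.Nonempty := by
    have h0mem : (0:ℝ) ∈ Icc (u α lam t₁) (u α lam 0) := by
      rw [hu0]; exact ⟨ht₁, zero_le_one⟩
    obtain ⟨z, hz, hz0⟩ := intermediate_value_Icc' ht₁0 hconIcc h0mem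
    exact ⟨z, hz, hz0⟩
  have hZcpt : IsCompact Z := isCompact_Icc.of_isClosed_subset hZclosed hZsub
  set t₀ : ℝ := sInf Z with ht₀
  have ht₀Z : t₀ ∈ Z := hZcpt.sInf_mem hZne
  have ht₀mem : t₀ ∈ Icc 0 t₁ := ht₀Z.1
  have hut₀ : u α lam t₀ = 0 := ht₀Z.2
  have ht₀pos : 0 < t₀ := by
    rcases ht₀mem.1.lt_or_eq with h | h
    · exact h
    · exfalso; rw [← h, hu0] at hut₀; linarith
  have hbefore : ∀ s, 0 ≤ s → s < t₀ → 0 < u α lam s := by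
    intro s hs0 hst
    by_contra hle
    push_neg at hle
    have hsub : Icc (0:ℝ) s ⊆ Icc 0 t₁ := Icc_subset_Icc le_rfl (by linarith [ht₀mem.2])
    have h0mem : (0:ℝ) ∈ Icc (u α lam s) (u α lam 0) := by
      rw [hu0]; exact ⟨hle, zero_le_one⟩
    obtain ⟨z, hz, hz0⟩ := intermediate_value_Icc' hs0 (hconIcc.mono hsub) h0mem
    have hzZ : z ∈ Z := ⟨hsub hz, hz0⟩
    have hge : t₀ ≤ z := csInf_le hZcpt.bddBelow hzZ
    have : z ≤ s := hz.2
    linarith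
  have hΓα : 0 < Real.Gamma α := Real.Gamma_pos_of_pos hα0
  set c : ℝ := lam / Real.Gamma α with hc
  have hcpos : 0 < c := div_pos hl hΓα
  set δ : ℝ := min (t₀/2) ((α/(2*c)) ^ ((1:ℝ)/α)) with hδ
  have hδpos : 0 < δ :=
    lt_min (by linarith) (Real.rpow_pos_of_pos (by positivity) _)
  have hδt₀ : δ ≤ t₀ / 2 := min_le_left _ _
  have hδbound : c * δ ^ α / α ≤ 1/2 := by
    have h1 : δ ^ α ≤ α/(2*c) := by
      have h2 : δ ≤ (α/(2*c)) ^ ((1:ℝ)/α) := min_le_right _ _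
      have h3 := Real.rpow_le_rpow hδpos.le h2 hα0.le
      rwa [← Real.rpow_mul (by positivity), one_div_mul_cancel hα0.ne', Real.rpow_one] at h3
    have h4 : c * δ ^ α / α ≤ c * (α/(2*c)) / α := by gcongr
    have h5 : c * (α/(2*c)) / α = 1/2 := by
      field_simp
    linarith
  set τ : ℝ := t₀ - δ with hτ
  have hτpos : 0 < τ := by rw [hτ]; linarith
  have hτlt : τ < t₀ := by rw [hτ]; linarith
  have hIccsub : Icc τ t₀ ⊆ Ici (0:ℝ) := fun x hx => le_trans hτpos.le hx.1
  obtain ⟨ts, htsmem, htsmax⟩ := isCompact_Icc.exists_isMaxOn (nonempty_Icc.mpr hτlt.le)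
    (hucont.mono hIccsub)
  set M : ℝ := u α lam ts with hM
  have hMτ : u α lam τ ≤ M := htsmax ⟨le_rfl, hτlt.le⟩
  have hMpos : 0 < M := lt_of_lt_of_le (hbefore τ hτpos.le hτlt) hMτ
  have htslt : ts < t₀ := by
    rcases htsmem.2.lt_or_eq with h | h
    · exact h
    · exfalso
      have : M = 0 := by rw [hM, h, hut₀]
      linarith
  have htspos : 0 < ts := lt_of_lt_of_le hτpos htsmem.1
  -- integral equation at t₀ and ts
  have hIE0 := IE hα0 hl ht₀pos
  have hIEs := IE hα0 hl htspos
  rw [← hc] at hIE0 hIEs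
  have hcontu : ContinuousOn (u α lam) (Icc 0 t₀) := hucont.mono (fun x hx => hx.1)
  have hcontu' : ContinuousOn (u α lam) (Icc 0 ts) := hucont.mono (fun x hx => hx.1)
  have hint0 : IntegrableOn (fun s => (t₀ - s) ^ (α-1) * u α lam s) (Ioc 0 t₀) :=
    integrable_kernel_mul hα0 ht₀pos hcontu
  have hints : IntegrableOn (fun s => (ts - s) ^ (α-1) * u α lam s) (Ioc 0 ts) :=
    integrable_kernel_mul hα0 htspos hcontu'
  have hunion : Ioc (0:ℝ) ts ∪ Ioc ts t₀ = Ioc 0 t₀ :=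
    Ioc_union_Ioc_eq_Ioc htspos.le htslt.le
  have hsub1 : Ioc (0:ℝ) ts ⊆ Ioc 0 t₀ := by rw [← hunion]; exact subset_union_left
  have hsub2 : Ioc ts t₀ ⊆ Ioc (0:ℝ) t₀ := by rw [← hunion]; exact subset_union_right
  have hsplit : (∫ s in Ioc (0:ℝ) t₀, (t₀ - s) ^ (α-1) * u α lam s)
      = (∫ s in Ioc (0:ℝ) ts, (t₀ - s) ^ (α-1) * u α lam s)
        + ∫ s in Ioc ts t₀, (t₀ - s) ^ (α-1) * u α lam s := by
    rw [← hunion]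
    exact setIntegral_union (Ioc_disjoint_Ioc_of_le le_rfl) measurableSet_Ioc
      (hint0.mono_set hsub1) (hint0.mono_set hsub2)
  have hcomp1 : (∫ s in Ioc (0:ℝ) ts, (t₀ - s) ^ (α-1) * u α lam s)
      ≤ ∫ s in Ioc (0:ℝ) ts, (ts - s) ^ (α-1) * u α lam s := by
    rw [integral_Ioc_eq_integral_Ioo, integral_Ioc_eq_integral_Ioo]
    refine setIntegral_mono_on
      ((hint0.mono_set hsub1).mono_set Ioo_subset_Ioc_self)
      (hints.mono_set Ioo_subset_Ioc_self) measurableSet_Ioo ?_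
    intro s hs
    have hu : 0 ≤ u α lam s := (hbefore s hs.1.le (hs.2.trans htslt)).le
    refine mul_le_mul_of_nonneg_right ?_ hu
    exact Real.rpow_le_rpow_of_nonpos (by linarith [hs.2]) (by linarith) (by linarith)
  have hkint : (∫ s in Ioc ts t₀, (t₀ - s) ^ (α-1)) = (t₀ - ts) ^ α / α := by
    rw [← intervalIntegral.integral_of_le htslt.le,
      intervalIntegral.integral_comp_sub_left (fun y : ℝ => y ^ (α-1)) t₀, sub_self,
      integral_rpow (Or.inl (by linarith : (-1:ℝ) < α - 1))]
    rw [sub_add_cancel, Real.zero_rpow hα0.ne']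
    ring
  have hcomp2 : (∫ s in Ioc ts t₀, (t₀ - s) ^ (α-1) * u α lam s)
      ≤ M * ((t₀ - ts) ^ α / α) := by
    have hle : (∫ s in Ioc ts t₀, (t₀ - s) ^ (α-1) * u α lam s)
        ≤ ∫ s in Ioc ts t₀, (t₀ - s) ^ (α-1) * M := by
      refine setIntegral_mono_on (hint0.mono_set hsub2)
        ((integrable_kernel_mul hα0 ht₀pos continuousOn_const).mono_set hsub2)
        measurableSet_Ioc ?_
      intro s hs
      have hsM : u α lam s ≤ M := htsmax ⟨by linarith [htsmem.1, hs.1], hs.2⟩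
      exact mul_le_mul_of_nonneg_left hsM (Real.rpow_nonneg (by linarith [hs.2]) _)
    refine hle.trans ?_
    rw [MeasureTheory.integral_mul_const, hkint]
    exact le_of_eq (by ring)
  -- assemble the contradiction
  have hIs : M = 1 - c * ∫ s in Ioc (0:ℝ) ts, (ts - s) ^ (α-1) * u α lam s := by
    rw [hM]; exact hIEs
  have hI0 : (0:ℝ) = 1 - c * ∫ s in Ioc (0:ℝ) t₀, (t₀ - s) ^ (α-1) * u α lam s := by
    have h := hIE0
    rw [hut₀] at h
    exact h
  have hsplit' : c * (∫ s in Ioc (0:ℝ) t₀, (t₀ - s) ^ (α-1) * u α lam s)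
      = c * (∫ s in Ioc (0:ℝ) ts, (t₀ - s) ^ (α-1) * u α lam s)
        + c * ∫ s in Ioc ts t₀, (t₀ - s) ^ (α-1) * u α lam s := by
    rw [hsplit]; ring
  have hc1 : c * (∫ s in Ioc (0:ℝ) ts, (t₀ - s) ^ (α-1) * u α lam s)
      ≤ c * ∫ s in Ioc (0:ℝ) ts, (ts - s) ^ (α-1) * u α lam s :=
    mul_le_mul_of_nonneg_left hcomp1 hcpos.le
  have hc2 : c * (∫ s in Ioc ts t₀, (t₀ - s) ^ (α-1) * u α lam s)
      ≤ c * (M * ((t₀ - ts) ^ α / α)) :=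
    mul_le_mul_of_nonneg_left hcomp2 hcpos.le
  have hMle : M ≤ c * (M * ((t₀ - ts) ^ α / α)) := by linarith
  have hexp : (t₀ - ts) ^ α ≤ δ ^ α := by
    refine Real.rpow_le_rpow (by linarith) ?_ hα0.le
    have := htsmem.1
    rw [hτ] at this
    linarith
  have hfin : c * (M * ((t₀ - ts) ^ α / α)) ≤ M * (c * δ ^ α / α) := by
    have h6 : c * (M * ((t₀ - ts) ^ α / α)) = M * (c * (t₀ - ts) ^ α / α) := by ring
    rw [h6]
    gcongr
  have hhalf : M * (c * δ ^ α / α) ≤ M * (1/2) :=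
    mul_le_mul_of_nonneg_left hδbound hMpos.le
  linarith

end MLaux

/-- For every real α with 0 < α ≤ 1 and every real x, E_α(x) > 0. -/
theorem mittagLeffler_pos (α : ℝ) (hα0 : 0 < α) (hα1 : α ≤ 1) (x : ℝ) :
    0 < mittagLeffler α x := by
  rcases le_or_gt 0 x with hx | hx
  · have hsum := MLaux.summable_ml hα0 x
    have h0 : (fun k : ℕ => x ^ k / Real.Gamma (α * k + 1)) 0 = 1 := by
      simp [Real.Gamma_one]
    have hle : (fun k : ℕ => x ^ k / Real.Gamma (α * k + 1)) 0 ≤ mittagLeffler α x := by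
      refine Summable.le_tsum hsum 0 (fun k _ => ?_)
      exact div_nonneg (pow_nonneg hx _) (Real.Gamma_pos_of_pos (by positivity)).le
    rw [h0] at hle
    linarith
  · have hl : 0 < -x := by linarith
    have := MLaux.u_pos hα0 hα1 hl 1 zero_le_one
    have h1 : MLaux.u α (-x) 1 = mittagLeffler α x := by
      simp [MLaux.u, Real.one_rpow]
    linarith [h1 ▸ this]
end
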